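/- (i) For every positive semidefinite P ∈ ℝ^{d×d}, Φ(P) is symmetric. (ii) For all positive semidefinite P, Q and every n ≥ 1: if P ≥ Q in Loewner order then Φ_n(P) ≥ Φ_n(Q); moreover Φ_{n+1}(0) ≥ Φ_n(0) for every n ≥ 0. -/

import Mathlib

open Matrix

section Aux

variable {d : ℕ}

/-- For psd `X, Y`, the matrix `1 + X * Y` is nonsingular. -/
lemma riccati_isUnit_det {X Y : Matrix (Fin d) (Fin d) ℝ}
    (hX : X.PosSemidef) (hY : Y.PosSemidef) : IsUnit (1 + X * Y).det := by
  rw [isUnit_iff_ne_zero]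
  intro hdet
  obtain ⟨v, hv, hv0⟩ := (Matrix.exists_mulVec_eq_zero_iff).2 hdet
  have hveq : v + X *ᵥ (Y *ᵥ v) = 0 := by
    simpa [add_mulVec, one_mulVec, mulVec_mulVec] using hv0
  have hvY : (0:ℝ) ≤ v ⬝ᵥ Y *ᵥ v := by simpa [star_trivial] using hY.dotProduct_mulVec_nonneg v
  have hvX : (0:ℝ) ≤ (Y *ᵥ v) ⬝ᵥ X *ᵥ (Y *ᵥ v) := by
    simpa [star_trivial] using hX.dotProduct_mulVec_nonneg (Y *ᵥ v)
  have hv' : v = -(X *ᵥ (Y *ᵥ v)) := by linear_combination (norm := module) hveq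
  have heq2 : v ⬝ᵥ Y *ᵥ v = -((Y *ᵥ v) ⬝ᵥ X *ᵥ (Y *ᵥ v)) := by
    calc v ⬝ᵥ Y *ᵥ v = (Y *ᵥ v) ⬝ᵥ v := dotProduct_comm _ _
      _ = (Y *ᵥ v) ⬝ᵥ (-(X *ᵥ (Y *ᵥ v))) := by rw [← hv']
      _ = -((Y *ᵥ v) ⬝ᵥ X *ᵥ (Y *ᵥ v)) := by rw [dotProduct_neg]
  have hle : v ⬝ᵥ Y *ᵥ v ≤ 0 := by linarith
  have h0 : v ⬝ᵥ Y *ᵥ v = 0 := le_antisymm hle hvY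
  have hYv : Y *ᵥ v = 0 := by
    have := (hY.dotProduct_mulVec_zero_iff v).1 (by simpa [star_trivial] using h0)
    exact this
  apply hv
  rw [hv', hYv, mulVec_zero, neg_zero]

/-- For psd `E, T`, the matrix `(1 + E * T)⁻¹ * E` is psd. -/
lemma riccati_key {E T : Matrix (Fin d) (Fin d) ℝ}
    (hE : E.PosSemidef) (hT : T.PosSemidef) : ((1 + E * T)⁻¹ * E).PosSemidef := by
  open scoped MatrixOrder in
  set H := CFC.sqrt E with hH
  have hHpsd : H.PosSemidef := by
    open scoped MatrixOrder in exact (CFC.sqrt_nonneg E).posSemidef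
  have hHs : H * H = E := by
    open scoped MatrixOrder in exact CFC.sqrt_mul_sqrt_self E hE.nonneg
  have hHherm : Hᴴ = H := hHpsd.isHermitian
  have hHTH : (H * T * H).PosSemidef := by
    have := hT.conjTranspose_mul_mul_same H
    rwa [hHherm] at this
  have hK : (1 + H * T * H).PosDef := Matrix.PosDef.add_posSemidef Matrix.PosDef.one hHTH
  have hKdet : IsUnit (1 + H * T * H).det := (Matrix.isUnit_iff_isUnit_det _).1 hK.isUnit
  have hudet : IsUnit (1 + E * T).det := riccati_isUnit_det hE hT
  have hcomm : (1 + E * T) * H = H * (1 + H * T * H) := by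
    rw [add_mul, mul_add, one_mul, mul_one, ← hHs]
    noncomm_ring
  have heq : (1 + E * T) * (H * (1 + H * T * H)⁻¹ * H) = E := by
    calc (1 + E * T) * (H * (1 + H * T * H)⁻¹ * H)
        = ((1 + E * T) * H) * (1 + H * T * H)⁻¹ * H := by noncomm_ring
      _ = H * ((1 + H * T * H) * (1 + H * T * H)⁻¹) * H := by rw [hcomm]; noncomm_ring
      _ = H * H := by rw [Matrix.mul_nonsing_inv _ hKdet, mul_one]
      _ = E := hHs
  have hform : (1 + E * T)⁻¹ * E = H * (1 + H * T * H)⁻¹ * H := by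
    have hc := Matrix.nonsing_inv_mul_cancel_left (1 + E * T)
      (H * (1 + H * T * H)⁻¹ * H) hudet
    rw [heq] at hc
    exact hc
  rw [hform]
  have := (hK.inv.posSemidef).mul_mul_conjTranspose_same H
  rwa [hHherm] at this

/-- The monotone/psd step for the Riccati map core `(1 + P S)⁻¹ P`. -/
lemma riccati_step {S P Q : Matrix (Fin d) (Fin d) ℝ}
    (hS : S.PosSemidef) (hP : P.PosSemidef) (hQ : Q.PosSemidef)
    (hPQ : (P - Q).PosSemidef) :
    ((1 + P * S)⁻¹ * P - (1 + Q * S)⁻¹ * Q).PosSemidef := by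
  have hSsym : Sᵀ = S := by
    have h := hS.isHermitian
    rwa [IsHermitian, conjTranspose_eq_transpose_of_trivial] at h
  have hQsym : Qᵀ = Q := by
    have h := hQ.isHermitian
    rwa [IsHermitian, conjTranspose_eq_transpose_of_trivial] at h
  set D := P - Q with hD
  set M := (1 + Q * S)⁻¹ with hM
  have hdetQ : IsUnit (1 + Q * S).det := riccati_isUnit_det hQ hS
  have hdetP : IsUnit (1 + P * S).det := riccati_isUnit_det hP hS
  have hdetSQ : IsUnit (1 + S * Q).det := riccati_isUnit_det hS hQ
  set E := M * D * Mᵀ with hE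
  set T := S + S * Q * S with hT
  have hEpsd : E.PosSemidef := by
    have := hPQ.mul_mul_conjTranspose_same M
    rwa [conjTranspose_eq_transpose_of_trivial] at this
  have hTpsd : T.PosSemidef := by
    apply hS.add
    have := hQ.conjTranspose_mul_mul_same S
    rwa [conjTranspose_eq_transpose_of_trivial, hSsym] at this
  have hdetET : IsUnit (1 + E * T).det := riccati_isUnit_det hEpsd hTpsd
  -- Mᵀ = (1 + S*Q)⁻¹
  have hMT : Mᵀ = (1 + S * Q)⁻¹ := by
    rw [hM, Matrix.transpose_nonsing_inv, transpose_add, transpose_one, transpose_mul,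
      hSsym, hQsym]
  -- Mᵀ * T = S
  have hMTS : Mᵀ * T = S := by
    have h1 : T = (1 + S * Q) * S := by rw [hT]; noncomm_ring
    rw [hMT, h1, Matrix.nonsing_inv_mul_cancel_left _ _ hdetSQ]
  -- E * T = M * D * S
  have hET : E * T = M * D * S := by
    rw [hE, mul_assoc (M * D) Mᵀ T, hMTS]
  -- M * (1 + Q * S) = 1
  have hMQ : M * (1 + Q * S) = 1 := Matrix.nonsing_inv_mul _ hdetQ
  -- 1 + E * T = M * (1 + P * S)
  have h1ET : 1 + E * T = M * (1 + P * S) := by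
    have : (1 : Matrix (Fin d) (Fin d) ℝ) + P * S = (1 + Q * S) + D * S := by
      rw [hD]; noncomm_ring
    rw [hET, this, mul_add, hMQ, mul_assoc]
  -- 1 - S * M * Q = (1 + S * Q)⁻¹
  have hSMQ : (1 + S * Q)⁻¹ = 1 - S * M * Q := by
    apply Matrix.inv_eq_left_inv
    have hq : Q + Q * S * Q = (1 + Q * S) * Q := by noncomm_ring
    calc (1 - S * M * Q) * (1 + S * Q)
        = 1 + S * Q - S * (M * ((1 + Q * S) * Q)) := by rw [← hq]; noncomm_ring
      _ = 1 + S * Q - S * Q := by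
          rw [← mul_assoc M, hMQ, one_mul]
      _ = 1 := add_sub_cancel_right 1 (S * Q)
  -- the central identity: (1 + E*T) * (fP - fQ) = E
  set fP := (1 + P * S)⁻¹ * P with hfP
  set fQ := (1 + Q * S)⁻¹ * Q with hfQ
  have hPfP : (1 + P * S) * fP = P := Matrix.mul_nonsing_inv_cancel_left _ _ hdetP
  have hPfQ : (1 + P * S) * fQ = Q + D * S * M * Q := by
    have hsplit : (1 : Matrix (Fin d) (Fin d) ℝ) + P * S = (1 + Q * S) + D * S := by
      rw [hD]; noncomm_ring
    have h2 : (1 + Q * S) * fQ = Q := Matrix.mul_nonsing_inv_cancel_left _ _ hdetQ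
    rw [hsplit, add_mul, h2, hfQ, ← hM]
    noncomm_ring
  have hcentral : (1 + E * T) * (fP - fQ) = E := by
    rw [h1ET, mul_sub, mul_assoc M _ fP, mul_assoc M _ fQ, hPfP, hPfQ]
    calc M * P - M * (Q + D * S * M * Q)
        = M * D * (1 - S * M * Q) := by rw [hD]; noncomm_ring
      _ = M * D * Mᵀ := by rw [← hSMQ, ← hMT]
      _ = E := rfl
  have hfinal : fP - fQ = (1 + E * T)⁻¹ * E := by
    have hc := Matrix.nonsing_inv_mul_cancel_left (1 + E * T) (fP - fQ) hdetET
    rw [hcentral] at hc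
    exact hc.symm
  rw [hfinal]
  exact riccati_key hEpsd hTpsd

end Aux

/-- With `S := Bᵀ R₀⁻¹ B`, Riccati map `Φ(P) := A (I + P S)⁻¹ P Aᵀ + R`
and semigroup `Φ₀ = id`, `Φ_{n+1} = Φ ∘ Φ_n`:
(i) for every positive semidefinite `P`, `Φ(P)` is symmetric;
(ii) for all positive semidefinite `P, Q` and every `n ≥ 1`, if `P ≥ Q` in the Loewner
order then `Φ_n(P) ≥ Φ_n(Q)`; moreover `Φ_{n+1}(0) ≥ Φ_n(0)` for every `n ≥ 0`. -/
theorem statement4 {d d₀ : ℕ} (hd : 1 ≤ d) (hd₀ : 1 ≤ d₀)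
    (A : Matrix (Fin d) (Fin d) ℝ) (B : Matrix (Fin d₀) (Fin d) ℝ)
    (R : Matrix (Fin d) (Fin d) ℝ) (R₀ : Matrix (Fin d₀) (Fin d₀) ℝ)
    (hR : R.PosDef) (hR₀ : R₀.PosDef)
    (S : Matrix (Fin d) (Fin d) ℝ) (hSdef : S = Bᵀ * R₀⁻¹ * B)
    (Φ : Matrix (Fin d) (Fin d) ℝ → Matrix (Fin d) (Fin d) ℝ)
    (hΦ : ∀ P, Φ P = A * (1 + P * S)⁻¹ * P * Aᵀ + R) :
    (∀ P : Matrix (Fin d) (Fin d) ℝ, P.PosSemidef → (Φ P)ᵀ = Φ P) ∧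
    (∀ P Q : Matrix (Fin d) (Fin d) ℝ, P.PosSemidef → Q.PosSemidef →
      ∀ n : ℕ, 1 ≤ n → (P - Q).PosSemidef → (Φ^[n] P - Φ^[n] Q).PosSemidef) ∧
    (∀ n : ℕ, (Φ^[n + 1] 0 - Φ^[n] 0).PosSemidef) := by
  have hS : S.PosSemidef := by
    rw [hSdef]
    have := (hR₀.inv.posSemidef).conjTranspose_mul_mul_same B
    rwa [conjTranspose_eq_transpose_of_trivial] at this
  -- Φ sends psd to psd
  have hΦpsd : ∀ P : Matrix (Fin d) (Fin d) ℝ, P.PosSemidef → (Φ P).PosSemidef := by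
    intro P hP
    rw [hΦ]
    apply Matrix.PosSemidef.add _ hR.posSemidef
    have hc : ((1 + P * S)⁻¹ * P).PosSemidef := riccati_key hP hS
    have := hc.mul_mul_conjTranspose_same A
    rwa [conjTranspose_eq_transpose_of_trivial, ← mul_assoc] at this
  -- Φ is monotone on psd matrices
  have hΦmono : ∀ P Q : Matrix (Fin d) (Fin d) ℝ, P.PosSemidef → Q.PosSemidef →
      (P - Q).PosSemidef → (Φ P - Φ Q).PosSemidef := by
    intro P Q hP hQ hPQ
    have hcore := riccati_step hS hP hQ hPQ
    have hcong := hcore.mul_mul_conjTranspose_same A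
    rw [conjTranspose_eq_transpose_of_trivial] at hcong
    have hrw : Φ P - Φ Q = A * ((1 + P * S)⁻¹ * P - (1 + Q * S)⁻¹ * Q) * Aᵀ := by
      rw [hΦ, hΦ]
      noncomm_ring
    rwa [hrw]
  have hiterpsd : ∀ (X : Matrix (Fin d) (Fin d) ℝ), X.PosSemidef →
      ∀ m : ℕ, (Φ^[m] X).PosSemidef := by
    intro X hX m
    induction m with
    | zero => simpa using hX
    | succ m ihm => rw [Function.iterate_succ_apply']; exact hΦpsd _ ihm
  refine ⟨?_, ?_, ?_⟩
  · intro P hP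
    have h := (hΦpsd P hP).isHermitian
    rwa [IsHermitian, conjTranspose_eq_transpose_of_trivial] at h
  · intro P Q hP hQ n hn hPQ
    clear hn
    induction n with
    | zero => simpa using hPQ
    | succ n ih =>
      rw [Function.iterate_succ_apply', Function.iterate_succ_apply']
      exact hΦmono _ _ (hiterpsd P hP n) (hiterpsd Q hQ n) ih
  · intro n
    have hiter : ∀ m : ℕ, (Φ^[m] (0 : Matrix (Fin d) (Fin d) ℝ)).PosSemidef :=
      hiterpsd 0 (Matrix.PosSemidef.zero)
    induction n with
    | zero =>
      simpa using hiter 1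
    | succ n ih =>
      rw [Function.iterate_succ_apply' Φ (n+1), Function.iterate_succ_apply' Φ n]
      rw [Function.iterate_succ_apply'] at ih
      exact hΦmono _ _ (hΦpsd _ (hiter n)) (hiter n) ih
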